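/- In the Black-Scholes model with X_T = X₀ exp((r - σ²/2)T + σ√T Z), Z ~ N(0,1), the Gamma satisfies Γ = e^{-rT} (K/(X₀² σ √T)) E[Z 1_{X_T > K}]. -/

import Mathlib

open MeasureTheory ProbabilityTheory Real Filter Set
open scoped NNReal ENNReal

noncomputable def BSφ (z : ℝ) : ℝ := gaussianPDFReal 0 1 z

lemma BSφ_def (z : ℝ) : BSφ z = (Real.sqrt (2 * π))⁻¹ * Real.exp (-z ^ 2 / 2) := by
  simp [BSφ, gaussianPDFReal]
lemma BSφ_cont : Continuous BSφ := by unfold BSφ gaussianPDFReal; fun_prop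
lemma BSφ_nonneg (z : ℝ) : 0 ≤ BSφ z := gaussianPDFReal_nonneg 0 1 z
lemma BSφ_integrable : Integrable BSφ := integrable_gaussianPDFReal 0 1
lemma expShift (b z : ℝ) : Real.exp (b * z) * BSφ z
    = Real.exp (b ^ 2 / 2) * gaussianPDFReal b 1 z := by
  simp only [BSφ, gaussianPDFReal]
  rw [mul_left_comm, ← Real.exp_add, mul_left_comm, ← Real.exp_add]
  norm_num; left; ring_nf
lemma BSφ1_integrable (b : ℝ) : Integrable (fun z => Real.exp (b * z) * BSφ z) := by
  simp only [expShift]; exact (integrable_gaussianPDFReal b 1).const_mul _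
lemma id_BSφ_integrable : Integrable (fun z => z * BSφ z) := by
  have hb : Integrable (fun z => Real.exp (1 * z) * BSφ z + Real.exp ((-1) * z) * BSφ z) :=
    (BSφ1_integrable 1).add (BSφ1_integrable (-1))
  refine hb.mono' ((continuous_id.mul BSφ_cont).aestronglyMeasurable) ?_
  refine Filter.Eventually.of_forall fun z => ?_
  have h1 : |z| ≤ Real.exp (1 * z) + Real.exp ((-1) * z) := by
    rw [one_mul, neg_one_mul]
    rcases le_or_gt 0 z with h | h
    · rw [abs_of_nonneg h]; linarith [Real.add_one_le_exp z, (Real.exp_pos (-z)).le]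
    · rw [abs_of_neg h]; linarith [Real.add_one_le_exp (-z), (Real.exp_pos z).le]
  rw [Real.norm_eq_abs, abs_mul, abs_of_nonneg (BSφ_nonneg z)]
  nlinarith [BSφ_nonneg z, abs_nonneg z]

lemma hasDerivAt_tail (ψ : ℝ → ℝ) (hi : Integrable ψ) (hc : Continuous ψ) (c : ℝ) :
    HasDerivAt (fun c => ∫ z in Ioi c, ψ z) (-ψ c) c := by
  have key : ∀ d : ℝ, ∫ z in Ioi d, ψ z
      = ((∫ z, ψ z) - (∫ z in Iic (0:ℝ), ψ z)) - ∫ z in (0:ℝ)..d, ψ z := by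
    intro d
    rw [← intervalIntegral.integral_Iic_sub_Iic hi.integrableOn hi.integrableOn]
    have := intervalIntegral.integral_Iic_add_Ioi (f := ψ) (b := d) (μ := volume)
      hi.integrableOn hi.integrableOn
    linarith [this]
  simp_rw [key]
  have h1 : HasDerivAt (fun d => ∫ z in (0:ℝ)..d, ψ z) (ψ c) c :=
    intervalIntegral.integral_hasDerivAt_right hi.intervalIntegrable
      hc.aestronglyMeasurable.stronglyMeasurableAtFilter hc.continuousAt
  exact ((hasDerivAt_const c ((∫ z, ψ z) - ∫ z in Iic (0:ℝ), ψ z)).sub h1).congr_deriv (by simp)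

lemma integral_gaussianReal_eq (g : ℝ → ℝ) :
    ∫ z, g z ∂(gaussianReal 0 1) = ∫ z, BSφ z * g z := by
  rw [gaussianReal_of_var_ne_zero 0 one_ne_zero]
  have : (gaussianPDF 0 1) = fun x => ((Real.toNNReal (gaussianPDFReal 0 1 x) : ℝ≥0) : ℝ≥0∞) := rfl
  rw [this, integral_withDensity_eq_integral_smul
    ((measurable_gaussianPDFReal 0 1).real_toNNReal) g]
  congr 1; ext z
  rw [NNReal.smul_def, smul_eq_mul, Real.coe_toNNReal _ (gaussianPDFReal_nonneg 0 1 z)]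
  rfl

lemma integral_id_tail (d : ℝ) : ∫ z in Ioi d, z * BSφ z = BSφ d := by
  have hderiv : ∀ x : ℝ, HasDerivAt (fun z => -BSφ z) (x * BSφ x) x := by
    intro x
    have h1 : HasDerivAt (fun z : ℝ => -z ^ 2 / 2) (-x) x := by
      have := ((hasDerivAt_pow 2 x).neg).div_const 2
      simpa using this.congr_deriv (by ring)
    have h2 := (Real.hasDerivAt_exp (-x ^ 2 / 2)).comp x h1
    have h3 := (h2.const_mul ((Real.sqrt (2 * π))⁻¹)).neg
    simp only [BSφ_def]
    have h4 : -((Real.sqrt (2 * π))⁻¹ * (Real.exp (-x ^ 2 / 2) * -x))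
        = x * ((Real.sqrt (2 * π))⁻¹ * Real.exp (-x ^ 2 / 2)) := by ring
    exact h4 ▸ h3
  have hint : IntegrableOn (fun z => z * BSφ z) (Ioi d) := id_BSφ_integrable.integrableOn
  have htend : Tendsto (fun z => -BSφ z) atTop (nhds 0) := by
    rw [show (0:ℝ) = -0 by ring]
    apply Tendsto.neg
    rw [funext BSφ_def]
    rw [show (0:ℝ) = (Real.sqrt (2 * π))⁻¹ * 0 by ring]
    apply Tendsto.const_mul
    apply Real.tendsto_exp_atBot.comp
    apply Filter.Tendsto.atBot_div_const (by norm_num)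
    exact tendsto_neg_atBot_iff.mpr (tendsto_pow_atTop (by norm_num))
  have := integral_Ioi_of_hasDerivAt_of_tendsto
    (hderiv d).continuousAt.continuousWithinAt (fun x _ => hderiv x) hint htend
  rw [zero_sub, neg_neg] at this
  exact this

lemma bs_scalar1 (e ea eb p Bv K b x : ℝ) (hkx : x * ea * eb = K) :
    e * (ea * Bv)
      = e * (ea * Bv + x * ea * (-(eb * p) * -(1 / (b * x))) - K * (-p * -(1 / (b * x)))) := by
  linear_combination (-(e) * p / (b * x)) * hkx

lemma bs_scalar2 (e ea eb p K b x : ℝ) (hb : b ≠ 0) (hx : x ≠ 0)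
    (hkx : x * ea * eb = K) :
    e * K / (x ^ 2 * b) * p = e * (ea * (-(eb * p) * -(1 / (b * x)))) := by
  rw [← hkx]
  field_simp

theorem stmt_18 (X₀ K σ T r : ℝ) (hX₀ : 0 < X₀) (hK : 0 < K) (hσ : 0 < σ)
    (hT : 0 < T) :
    iteratedDeriv 2
      (fun x : ℝ => Real.exp (-r * T) * ∫ z,
        max (x * Real.exp ((r - σ ^ 2 / 2) * T + σ * Real.sqrt T * z) - K) 0
        ∂(gaussianReal 0 1)) X₀
    = Real.exp (-r * T) * K / (X₀ ^ 2 * σ * Real.sqrt T) *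
        ∫ z, (if K < X₀ * Real.exp ((r - σ ^ 2 / 2) * T + σ * Real.sqrt T * z)
          then z else 0) ∂(gaussianReal 0 1) := by
  set a : ℝ := (r - σ ^ 2 / 2) * T with ha
  set b : ℝ := σ * Real.sqrt T with hbdef
  have hb : 0 < b := mul_pos hσ (Real.sqrt_pos.mpr hT)
  set c : ℝ → ℝ := fun x => (Real.log (K / x) - a) / b with hcdef
  set A : ℝ → ℝ := fun d => ∫ z in Ioi d, BSφ z with hA
  set B : ℝ → ℝ := fun d => ∫ z in Ioi d, Real.exp (b * z) * BSφ z with hB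
  set f : ℝ → ℝ := fun x : ℝ => Real.exp (-r * T) * ∫ z,
      max (x * Real.exp (a + b * z) - K) 0 ∂(gaussianReal 0 1) with hf
  -- threshold equivalence
  have hiff : ∀ x : ℝ, 0 < x → ∀ z : ℝ, (K < x * Real.exp (a + b * z)) ↔ c x < z := by
    intro x hx z
    rw [hcdef]
    simp only
    rw [div_lt_iff₀ hb, sub_lt_iff_lt_add, show z * b + a = a + b * z by ring,
      Real.log_lt_iff_lt_exp (div_pos hK hx), div_lt_iff₀ hx]
    constructor <;> intro h <;> nlinarith [h]
  -- key identity
  have hkey : ∀ x : ℝ, 0 < x → x * Real.exp (a + b * c x) = K := by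
    intro x hx
    have : a + b * c x = Real.log (K / x) := by
      rw [hcdef]; field_simp; ring
    rw [this, Real.exp_log (div_pos hK hx)]
    field_simp
  -- closed form on positive reals
  have hVW : ∀ x : ℝ, 0 < x →
      f x = Real.exp (-r * T) * (x * Real.exp a * B (c x) - K * A (c x)) := by
    intro x hx
    rw [hf]
    simp only
    congr 1
    rw [integral_gaussianReal_eq]
    have hptw : ∀ z : ℝ, BSφ z * max (x * Real.exp (a + b * z) - K) 0
        = Set.indicator (Ioi (c x))
          (fun z => x * Real.exp a * (Real.exp (b * z) * BSφ z) - K * BSφ z) z := by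
      intro z
      rw [Set.indicator_apply]
      simp only [mem_Ioi]
      by_cases h : c x < z
      · rw [if_pos h, max_eq_left (by linarith [(hiff x hx z).mpr h])]
        rw [Real.exp_add]; ring
      · have hle : x * Real.exp (a + b * z) - K ≤ 0 := by
          have : ¬ (K < x * Real.exp (a + b * z)) := fun hh => h ((hiff x hx z).mp hh)
          linarith [not_lt.mp this]
        rw [if_neg h, max_eq_right hle, mul_zero]
    simp_rw [hptw]
    rw [integral_indicator measurableSet_Ioi]
    rw [integral_sub (((BSφ1_integrable b).const_mul (x * Real.exp a)).integrableOn)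
      ((BSφ_integrable.const_mul K).integrableOn)]
    rw [integral_const_mul, integral_const_mul]
  -- derivative of c
  have hcderiv : ∀ x : ℝ, 0 < x → HasDerivAt c (-(1 / (b * x))) x := by
    intro x hx
    have h1 : HasDerivAt (fun y : ℝ => (Real.log (K / y) - a) / b) (-(1 / (b * x))) x := by
      have hl : HasDerivAt (fun y : ℝ => Real.log (K / y)) (-x⁻¹) x := by
        have : ∀ᶠ y in nhds x, Real.log (K / y) = Real.log K - Real.log y := by
          filter_upwards [eventually_gt_nhds hx] with y hy
          rw [Real.log_div hK.ne' hy.ne']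
        refine HasDerivAt.congr_of_eventuallyEq ?_ this
        simpa using ((Real.hasDerivAt_log hx.ne').const_sub (Real.log K))
      have := (hl.sub_const a).div_const b
      refine this.congr_deriv ?_
      ring
    exact h1
  -- derivative of W
  have hWderiv : ∀ x : ℝ, 0 < x →
      HasDerivAt (fun y => Real.exp (-r * T) * (y * Real.exp a * B (c y) - K * A (c y)))
        (Real.exp (-r * T) * (Real.exp a * B (c x))) x := by
    intro x hx
    have hcd := hcderiv x hx
    have hAtail : ∀ d : ℝ, HasDerivAt A (-BSφ d) d := fun d =>
      hasDerivAt_tail BSφ BSφ_integrable BSφ_cont d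
    have hBtail : ∀ d : ℝ, HasDerivAt B (-(Real.exp (b * d) * BSφ d)) d := by
      intro d
      exact hasDerivAt_tail (fun z => Real.exp (b * z) * BSφ z) (BSφ1_integrable b)
        ((Real.continuous_exp.comp (continuous_const.mul continuous_id)).mul BSφ_cont) d
    have hAc : HasDerivAt (fun y => A (c y)) (-BSφ (c x) * -(1 / (b * x))) x :=
      (hAtail (c x)).comp x hcd
    have hBc : HasDerivAt (fun y => B (c y))
        (-(Real.exp (b * c x) * BSφ (c x)) * -(1 / (b * x))) x :=
      (hBtail (c x)).comp x hcd
    have h1 : HasDerivAt (fun y : ℝ => y * Real.exp a) (Real.exp a) x := by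
      simpa using (hasDerivAt_id x).mul_const (Real.exp a)
    have h2 := h1.mul hBc
    have h3 := hAc.const_mul K
    have h4 := (h2.sub h3).const_mul (Real.exp (-r * T))
    have hkx : x * Real.exp a * Real.exp (b * c x) = K := by
      rw [mul_assoc, ← Real.exp_add]; exact hkey x hx
    refine h4.congr_deriv (Eq.symm ?_)
    exact bs_scalar1 (Real.exp (-r * T)) (Real.exp a) (Real.exp (b * c x)) (BSφ (c x))
      (B (c x)) K b x hkx
  -- second derivative function value
  have hGderiv : HasDerivAt (fun y => Real.exp (-r * T) * (Real.exp a * B (c y)))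
      (Real.exp (-r * T) * K / (X₀ ^ 2 * b) * BSφ (c X₀)) X₀ := by
    have hcd := hcderiv X₀ hX₀
    have hBtail : HasDerivAt B (-(Real.exp (b * c X₀) * BSφ (c X₀))) (c X₀) :=
      hasDerivAt_tail (fun z => Real.exp (b * z) * BSφ z) (BSφ1_integrable b)
        ((Real.continuous_exp.comp (continuous_const.mul continuous_id)).mul BSφ_cont) (c X₀)
    have hBc : HasDerivAt (fun y => B (c y))
        (-(Real.exp (b * c X₀) * BSφ (c X₀)) * -(1 / (b * X₀))) X₀ := hBtail.comp X₀ hcd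
    have h := (hBc.const_mul (Real.exp a)).const_mul (Real.exp (-r * T))
    have hkx : X₀ * Real.exp a * Real.exp (b * c X₀) = K := by
      rw [mul_assoc, ← Real.exp_add]; exact hkey X₀ hX₀
    refine h.congr_deriv (Eq.symm ?_)
    exact bs_scalar2 (Real.exp (-r * T)) (Real.exp a) (Real.exp (b * c X₀)) (BSφ (c X₀))
      K b X₀ hb.ne' hX₀.ne' hkx
  -- RHS evaluation
  have hRHS : ∫ z, (if K < X₀ * Real.exp (a + b * z) then z else 0) ∂(gaussianReal 0 1)
      = BSφ (c X₀) := by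
    rw [integral_gaussianReal_eq]
    have : ∀ z : ℝ, BSφ z * (if K < X₀ * Real.exp (a + b * z) then z else 0)
        = Set.indicator (Ioi (c X₀)) (fun z => z * BSφ z) z := by
      intro z
      rw [Set.indicator_apply]
      simp only [mem_Ioi]
      by_cases h : c X₀ < z
      · rw [if_pos ((hiff X₀ hX₀ z).mpr h), if_pos h]; ring
      · rw [if_neg (fun hh => h ((hiff X₀ hX₀ z).mp hh)), if_neg h, mul_zero]
    simp_rw [this]
    rw [integral_indicator measurableSet_Ioi, integral_id_tail]
  -- conclude
  have hfeq : f =ᶠ[nhds X₀] fun y => Real.exp (-r * T) * (y * Real.exp a * B (c y) - K * A (c y)) :=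
    eventually_of_mem (Ioi_mem_nhds hX₀) fun y hy => hVW y hy
  have hd1 : deriv f =ᶠ[nhds X₀] fun y => Real.exp (-r * T) * (Real.exp a * B (c y)) := by
    filter_upwards [Ioi_mem_nhds hX₀] with y hy
    have h1 : f =ᶠ[nhds y] fun y' => Real.exp (-r * T) * (y' * Real.exp a * B (c y') - K * A (c y')) :=
      eventually_of_mem (Ioi_mem_nhds hy) fun y' hy' => hVW y' hy'
    rw [h1.deriv_eq, (hWderiv y hy).deriv]
  have key : iteratedDeriv 2 f X₀ = Real.exp (-r * T) * K / (X₀ ^ 2 * b) * BSφ (c X₀) := by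
    rw [show (2 : ℕ) = 1 + 1 from rfl, iteratedDeriv_succ, iteratedDeriv_one]
    rw [hd1.deriv_eq, hGderiv.deriv]
  calc iteratedDeriv 2 f X₀
      = Real.exp (-r * T) * K / (X₀ ^ 2 * b) * BSφ (c X₀) := key
    _ = Real.exp (-r * T) * K / (X₀ ^ 2 * σ * Real.sqrt T) *
        ∫ z, (if K < X₀ * Real.exp (a + b * z) then z else 0) ∂(gaussianReal 0 1) := by
        rw [hRHS, hbdef]; ring_nf
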